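/- Let (p_i)_{i∈ℕ} be a monotonically decreasing sequence of reals with 0 < p_i < 1 for all i, which is summable with Σ := ∑_{i=1}^{∞} p_i < 1. Then for every n ∈ ℕ: T_LO(p_1,…,p_n) ≤ n/(2 p_n (1 − Σ)). -/

import Mathlib

/-- `TLO n p = ∑_{i=1}^n 1/(2 p_i ∏_{j=1}^{i-1} (1 - p_j))`, the exact expected run time
of the (1+1) EA with bit flip probabilities `p 1, …, p n` on the `n`-bit LeadingOnes
function (Böttcher–Doerr–Neumann). -/
noncomputable def TLO (n : ℕ) (p : ℕ → ℝ) : ℝ :=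
  ∑ i ∈ Finset.Icc 1 n, 1 / (2 * p i * ∏ j ∈ Finset.Ico 1 i, (1 - p j))

/-- Weierstrass product inequality. -/
lemma weier (p : ℕ → ℝ) (s : Finset ℕ) (h : ∀ j ∈ s, 0 ≤ p j ∧ p j ≤ 1) :
    1 - ∑ j ∈ s, p j ≤ ∏ j ∈ s, (1 - p j) := by
  induction s using Finset.cons_induction with
  | empty => simp
  | cons a s ha ih =>
    rw [Finset.sum_cons, Finset.prod_cons]
    have h1 := h a (Finset.mem_cons_self a s)
    have ih' := ih (fun j hj => h j (Finset.mem_cons_of_mem hj))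
    have hs : 0 ≤ ∑ j ∈ s, p j :=
      Finset.sum_nonneg fun j hj => (h j (Finset.mem_cons_of_mem hj)).1
    nlinarith [h1.1, h1.2]

theorem stmt12 (p : ℕ → ℝ)
    (hp : ∀ i : ℕ, 1 ≤ i → 0 < p i ∧ p i < 1)
    (hmono : ∀ i : ℕ, 1 ≤ i → p (i + 1) ≤ p i)
    (hsum : Summable (fun i : ℕ => p (i + 1)))
    (hSigma : (∑' i : ℕ, p (i + 1)) < 1) :
    ∀ n : ℕ, 1 ≤ n →
      TLO n p ≤ (n : ℝ) / (2 * p n * (1 - ∑' i : ℕ, p (i + 1))) := by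
  intro n hn
  set S := ∑' i : ℕ, p (i + 1) with hS
  have hS1 : 0 < 1 - S := by linarith
  have hpn : 0 < p n := (hp n hn).1
  have hanti : ∀ a b : ℕ, 1 ≤ a → a ≤ b → p b ≤ p a := by
    intro a b ha hab
    induction b with
    | zero => omega
    | succ b ih =>
      rcases Nat.lt_or_ge a (b+1) with h | h
      · exact le_trans (hmono b (by omega)) (ih (by omega))
      · have : a = b + 1 := by omega
        subst this; rfl
  -- partial sums bounded by S
  have hpartial : ∀ i : ℕ, ∑ j ∈ Finset.Ico 1 i, p j ≤ S := by
    intro i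
    have : ∑ j ∈ Finset.Ico 1 i, p j = ∑ j ∈ Finset.range (i - 1), p (j + 1) := by
      rcases Nat.eq_zero_or_pos i with h | h
      · subst h; simp
      · rw [Finset.range_eq_Ico]
        rw [Finset.sum_Ico_eq_sum_range]
        exact Finset.sum_congr (Finset.range_eq_Ico _) fun j _ => by rw [Nat.add_comm]
        -- range vs Ico handled by sum_congr
    rw [this]
    exact Summable.sum_le_tsum _ (fun j _ => le_of_lt (hp (j+1) (by omega)).1) hsum
  have hprod : ∀ i : ℕ, 1 - S ≤ ∏ j ∈ Finset.Ico 1 i, (1 - p j) := by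
    intro i
    calc 1 - S ≤ 1 - ∑ j ∈ Finset.Ico 1 i, p j := by linarith [hpartial i]
    _ ≤ _ := weier p _ (fun j hj => by
        have := hp j (Finset.mem_Ico.mp hj).1
        constructor <;> linarith [this.1, this.2])
  have key : ∀ i ∈ Finset.Icc 1 n,
      1 / (2 * p i * ∏ j ∈ Finset.Ico 1 i, (1 - p j)) ≤ 1 / (2 * p n * (1 - S)) := by
    intro i hi
    obtain ⟨hi1, hin⟩ := Finset.mem_Icc.mp hi
    have hpi : p n ≤ p i := hanti i n hi1 hin
    apply one_div_le_one_div_of_le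
    · positivity
    · have := hprod i
      have hpi0 : 0 < p i := (hp i hi1).1
      nlinarith
  calc TLO n p ≤ ∑ _i ∈ Finset.Icc 1 n, 1 / (2 * p n * (1 - S)) :=
        Finset.sum_le_sum key
    _ = (n : ℝ) * (1 / (2 * p n * (1 - S))) := by
        rw [Finset.sum_const, Nat.card_Icc]; simp [nsmul_eq_mul]
    _ = (n : ℝ) / (2 * p n * (1 - S)) := by ring
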